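/- Let 0 < r < n be integers. A nonempty set F ⊆ ℝ^n is an exposed face of the hypersimplex Δ(n,r) if and only if F = 𝔮(A,B) for some disjoint subsets A, B ⊆ [n] satisfying either (|A| = n−r and |B| = r) or (|A| < n−r and |B| < r). Moreover, every such 𝔮(A,B) is nonempty; in the case |A| = n−r and |B| = r it is a single point (the 0/1 vector with support B), and in the case |A| < n−r and |B| < r its affine span has dimension n − 1 − |A| − |B|. -/

import Mathlib

open Finset

def hypersimplex (n r : ℕ) : Set (Fin n → ℝ) :=
  {x | (∀ i, 0 ≤ x i ∧ x i ≤ 1) ∧ ∑ i, x i = (r : ℝ)}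

def faceQ (n r : ℕ) (A B : Finset (Fin n)) : Set (Fin n → ℝ) :=
  {x ∈ hypersimplex n r | (∀ a ∈ A, x a = 0) ∧ (∀ b ∈ B, x b = 1)}

def IsExposedFaceOf {n : ℕ} (K F : Set (Fin n → ℝ)) : Prop :=
  F.Nonempty ∧ ∃ ℓ : (Fin n → ℝ) →ₗ[ℝ] ℝ, F = {x ∈ K | ∀ y ∈ K, ℓ y ≤ ℓ x}

/-- The linear functional `x ↦ ∑ i, c i * x i`. -/
def coeffFun {n : ℕ} (c : Fin n → ℝ) : (Fin n → ℝ) →ₗ[ℝ] ℝ where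
  toFun x := ∑ i, c i * x i
  map_add' x y := by simp [mul_add, Finset.sum_add_distrib]
  map_smul' m x := by simp [Finset.mul_sum, mul_left_comm, mul_comm, mul_assoc]

/-- A canonical point of `faceQ n r A B`. -/
noncomputable def basept (n r : ℕ) (A B : Finset (Fin n)) : Fin n → ℝ := fun i =>
  if i ∈ B then 1 else if i ∈ A then 0 else
    ((r : ℝ) - B.card) / ((n : ℝ) - A.card - B.card)

lemma basept_mem {n r : ℕ} {A B : Finset (Fin n)} (hAB : Disjoint A B)
    (hB : B.card ≤ r) (hA : A.card + r ≤ n) : basept n r A B ∈ faceQ n r A B := by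
  have hABn : A.card + B.card ≤ n := by
    have := (card_union_of_disjoint hAB) ▸ card_le_card (subset_univ (A ∪ B))
    simpa using this
  set m : ℝ := (n : ℝ) - A.card - B.card with hm
  set s : ℝ := (r : ℝ) - B.card with hs
  have hs0 : 0 ≤ s := by simp [hs]; exact_mod_cast hB
  have hsm : s ≤ m := by
    simp only [hs, hm]
    have : (A.card : ℝ) + r ≤ n := by exact_mod_cast hA
    linarith
  have hm0 : 0 ≤ m := le_trans hs0 hsm
  have hq0 : 0 ≤ s / m := div_nonneg hs0 hm0
  have hq1 : s / m ≤ 1 := by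
    rcases eq_or_lt_of_le hm0 with h | h
    · simp [← h]
    · exact (div_le_one h).mpr hsm
  have hcard : ∀ i, i ∉ B → i ∉ A → basept n r A B i = s / m := by
    intro i hiB hiA; simp [basept, hiB, hiA, hs, hm]
  constructor
  · constructor
    · intro i
      by_cases hiB : i ∈ B
      · simp [basept, hiB]
      by_cases hiA : i ∈ A
      · simp [basept, hiB, hiA]
      · rw [hcard i hiB hiA]; exact ⟨hq0, hq1⟩
    · -- sum
      have hms : m * (s / m) = s := by
        rcases eq_or_lt_of_le hm0 with h | h
        · have : s = 0 := le_antisymm (h ▸ hsm) hs0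
          simp [← h, this]
        · field_simp
      have hsplit : ∑ i ∈ (A ∪ B), basept n r A B i + ∑ i ∈ (A ∪ B)ᶜ, basept n r A B i
          = ∑ i, basept n r A B i := Finset.sum_add_sum_compl _ _
      have h1 : ∑ i ∈ (A ∪ B), basept n r A B i = (B.card : ℝ) := by
        rw [Finset.sum_union hAB]
        have hA0 : ∑ i ∈ A, basept n r A B i = 0 := by
          apply Finset.sum_eq_zero; intro a ha
          have : a ∉ B := fun h => (disjoint_left.mp hAB ha h)
          simp [basept, this, ha]
        have hB1 : ∑ i ∈ B, basept n r A B i = (B.card : ℝ) := by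
          rw [Finset.sum_congr rfl (fun b hb => show basept n r A B b = 1 by simp [basept, hb])]
          simp
        rw [hA0, hB1, zero_add]
      have h2 : ∑ i ∈ (A ∪ B)ᶜ, basept n r A B i = m * (s / m) := by
        have : ∀ i ∈ (A ∪ B)ᶜ, basept n r A B i = s / m := by
          intro i hi
          rw [Finset.mem_compl, Finset.mem_union] at hi
          push_neg at hi
          exact hcard i hi.2 hi.1
        rw [Finset.sum_congr rfl this, Finset.sum_const, nsmul_eq_mul]
        congr 1
        rw [Finset.card_compl, Finset.card_union_of_disjoint hAB]
        rw [Fintype.card_fin, Nat.cast_sub hABn, hm]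
        push_cast
        ring
      rw [← hsplit, h1, h2, hms, hs]
      ring
  · constructor
    · intro a ha
      have : a ∉ B := fun h => (disjoint_left.mp hAB ha h)
      simp [basept, this, ha]
    · intro b hb; simp [basept, hb]

lemma coeffFun_apply {n : ℕ} (c x : Fin n → ℝ) : coeffFun c x = ∑ i, c i * x i := rfl

lemma argmax_eq {n r : ℕ} (c : Fin n → ℝ) (t : ℝ) (A B : Finset (Fin n))
    (hA : ∀ a ∈ A, c a < t) (hB : ∀ b ∈ B, t < c b)
    (hC : ∀ i, i ∉ A → i ∉ B → c i = t)
    (hBr : B.card ≤ r) (hAr : A.card + r ≤ n) :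
    {x ∈ hypersimplex n r | ∀ y ∈ hypersimplex n r, coeffFun c y ≤ coeffFun c x}
      = faceQ n r A B := by
  have hAB : Disjoint A B := by
    rw [Finset.disjoint_left]
    intro a ha hb
    linarith [hA a ha, hB a hb]
  set M : ℝ := ∑ b ∈ B, (c b - t) + t * r with hM
  set g : (Fin n → ℝ) → Fin n → ℝ :=
    fun x i => (if i ∈ B then c i - t else 0) - (c i - t) * x i with hg
  have key1 : ∀ x ∈ hypersimplex n r, ∑ i, g x i = M - coeffFun c x := by
    intro x hx
    have h1 : ∑ i, (if i ∈ B then c i - t else 0) = ∑ b ∈ B, (c b - t) := by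
      rw [Finset.sum_ite_mem, Finset.univ_inter]
    have h2 : ∑ i, (c i - t) * x i = coeffFun c x - t * r := by
      rw [coeffFun_apply]
      have := hx.2
      calc ∑ i, (c i - t) * x i = ∑ i, (c i * x i - t * x i) := by
            exact Finset.sum_congr rfl (fun i _ => by ring)
        _ = ∑ i, c i * x i - t * ∑ i, x i := by
            rw [Finset.sum_sub_distrib, Finset.mul_sum]
        _ = coeffFun c x - t * r := by rw [this, coeffFun_apply]
    rw [hg]
    simp only [Finset.sum_sub_distrib, h1, h2, hM]
    ring
  have key2 : ∀ x ∈ hypersimplex n r, ∀ i, 0 ≤ g x i := by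
    intro x hx i
    rcases hx.1 i with ⟨h0, h1⟩
    by_cases hiB : i ∈ B
    · have := hB i hiB
      simp only [hg, hiB, if_pos]
      nlinarith
    by_cases hiA : i ∈ A
    · have := hA i hiA
      simp only [hg, hiB, if_neg, if_false]
      nlinarith
    · simp [hg, hiB, hC i hiA hiB]
  have hle : ∀ x ∈ hypersimplex n r, coeffFun c x ≤ M := by
    intro x hx
    have : (0:ℝ) ≤ ∑ i, g x i := Finset.sum_nonneg (fun i _ => key2 x hx i)
    rw [key1 x hx] at this
    linarith
  have faceval : ∀ x ∈ faceQ n r A B, coeffFun c x = M := by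
    intro x hx
    have hz : ∑ i, g x i = 0 := by
      apply Finset.sum_eq_zero
      intro i _
      by_cases hiB : i ∈ B
      · simp [hg, hiB, hx.2.2 i hiB]
      by_cases hiA : i ∈ A
      · simp [hg, hiB, hx.2.1 i hiA]
      · simp [hg, hiB, hC i hiA hiB]
    have := key1 x hx.1
    rw [hz] at this
    linarith
  have hbp := basept_mem hAB hBr hAr
  ext x
  constructor
  · rintro ⟨hx, hmax⟩
    have hxM : coeffFun c x = M := by
      have h1 := hmax _ hbp.1
      have h2 := faceval _ hbp
      have h3 := hle x hx
      linarith
    have hz : ∑ i, g x i = 0 := by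
      rw [key1 x hx, hxM]; ring
    have heach := (Finset.sum_eq_zero_iff_of_nonneg (fun i _ => key2 x hx i)).mp hz
    refine ⟨hx, ?_, ?_⟩
    · intro a ha
      have hanB : a ∉ B := fun h => (Finset.disjoint_left.mp hAB ha h)
      have := heach a (Finset.mem_univ a)
      simp only [hg, hanB, if_neg, if_false, zero_sub, neg_eq_zero] at this
      have hca := hA a ha
      rcases mul_eq_zero.mp this with h | h
      · linarith
      · exact h
    · intro b hb
      have := heach b (Finset.mem_univ b)
      simp only [hg, hb, if_pos] at this
      have hcb := hB b hb
      have : (c b - t) * (1 - x b) = 0 := by linarith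
      rcases mul_eq_zero.mp this with h | h
      · linarith
      · linarith
  · intro hx
    exact ⟨hx.1, fun y hy => (faceval x hx) ▸ hle y hy⟩

lemma faceQ_singleton {n r : ℕ} (hrn : r ≤ n) (A B : Finset (Fin n)) (hAB : Disjoint A B)
    (hAc : A.card = n - r) (hBc : B.card = r) :
    faceQ n r A B = {fun i => if i ∈ B then (1 : ℝ) else 0} := by
  have huniv : A ∪ B = univ := by
    apply Finset.eq_univ_of_card
    rw [Finset.card_union_of_disjoint hAB, hAc, hBc, Fintype.card_fin]
    omega
  ext x
  simp only [Set.mem_singleton_iff]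
  constructor
  · rintro ⟨hx, hA0, hB1⟩
    funext i
    by_cases hiB : i ∈ B
    · simp [hiB, hB1 i hiB]
    · have hiA : i ∈ A := by
        have : i ∈ A ∪ B := huniv ▸ Finset.mem_univ i
        rcases Finset.mem_union.mp this with h | h
        · exact h
        · exact absurd h hiB
      simp [hiB, hA0 i hiA]
  · rintro rfl
    refine ⟨⟨fun i => ?_, ?_⟩, fun a ha => ?_, fun b hb => ?_⟩
    · by_cases hiB : i ∈ B <;> simp [hiB]
    · rw [Finset.sum_ite_mem, Finset.univ_inter, Finset.sum_const, hBc]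
      simp
    · have : a ∉ B := fun h => Finset.disjoint_left.mp hAB ha h
      simp [this]
    · simp [hb]

lemma faceQ_dim {n r : ℕ} (_hr : 0 < r) (hrn : r < n) (A B : Finset (Fin n))
    (hAB : Disjoint A B) (hAc : A.card < n - r) (hBc : B.card < r) :
    Module.finrank ℝ (affineSpan ℝ (faceQ n r A B)).direction
      = n - 1 - A.card - B.card := by
  classical
  set s : Finset (Fin n) := A ∪ B with hsdef
  have hscard : s.card = A.card + B.card := Finset.card_union_of_disjoint hAB
  have hArn : A.card + r < n := by omega
  -- the linear map whose kernel is the direction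
  set f : (Fin n → ℝ) →ₗ[ℝ] ℝ × (↥s → ℝ) :=
    LinearMap.prod (coeffFun (fun _ => 1)) (LinearMap.funLeft ℝ ℝ (Subtype.val)) with hf
  have hfker : ∀ v : Fin n → ℝ, v ∈ LinearMap.ker f ↔
      (∑ i, v i = 0 ∧ ∀ i ∈ s, v i = 0) := by
    intro v
    rw [LinearMap.mem_ker, hf, LinearMap.prod_apply, Prod.mk_eq_zero]
    constructor
    · rintro ⟨h1, h2⟩
      refine ⟨by simpa [coeffFun_apply] using h1, fun i hi => ?_⟩
      have := congrFun h2 ⟨i, hi⟩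
      simpa [LinearMap.funLeft_apply] using this
    · rintro ⟨h1, h2⟩
      refine ⟨by simpa [coeffFun_apply] using h1, funext fun j => ?_⟩
      simpa [LinearMap.funLeft_apply] using h2 j.1 j.2
  -- vectorSpan = ker f
  have hbp := basept_mem hAB hBc.le hArn.le
  have hvs : vectorSpan ℝ (faceQ n r A B) = LinearMap.ker f := by
    apply le_antisymm
    · rw [vectorSpan_def]
      rw [Submodule.span_le]
      rintro v ⟨x, hx, y, hy, rfl⟩
      rw [SetLike.mem_coe, hfker]
      constructor
      · simp only [Pi.sub_apply, vsub_eq_sub, Finset.sum_sub_distrib, hx.1.2, hy.1.2, sub_self]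
      · intro i hi
        rcases Finset.mem_union.mp hi with h | h
        · simp [vsub_eq_sub, hx.2.1 i h, hy.2.1 i h]
        · simp [vsub_eq_sub, hx.2.2 i h, hy.2.2 i h]
    · intro v hv
      rw [hfker] at hv
      obtain ⟨hvsum, hvz⟩ := hv
      -- perturbation argument
      set q : ℝ := ((r : ℝ) - B.card) / ((n : ℝ) - A.card - B.card) with hq
      have hq0 : 0 < q := by
        apply div_pos
        · have : (B.card : ℝ) < r := by exact_mod_cast hBc
          linarith
        · have : (A.card : ℝ) + B.card < n := by
            have : A.card + B.card < n := by omega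
            exact_mod_cast this
          linarith
      have hq1 : q < 1 := by
        rw [div_lt_one]
        · have : (A.card : ℝ) + r < n := by exact_mod_cast hArn
          linarith
        · have : (A.card : ℝ) + B.card < n := by
            have : A.card + B.card < n := by omega
            exact_mod_cast this
          linarith
      set δ : ℝ := min q (1 - q) with hδ
      have hδ0 : 0 < δ := lt_min hq0 (by linarith)
      set T : ℝ := ∑ i, |v i| with hT
      have hT0 : 0 ≤ T := Finset.sum_nonneg (fun i _ => abs_nonneg _)
      set ε : ℝ := δ / (1 + T) with hε
      have hε0 : 0 < ε := div_pos hδ0 (by linarith)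
      have hεb : ∀ i, |ε * v i| ≤ δ := by
        intro i
        rw [abs_mul, abs_of_pos hε0]
        have h1 : |v i| ≤ T := Finset.single_le_sum (fun j _ => abs_nonneg (v j)) (Finset.mem_univ i)
        have h2 : ε * |v i| ≤ ε * (1 + T) := by
          apply mul_le_mul_of_nonneg_left (by linarith) hε0.le
        have h3 : ε * (1 + T) = δ := div_mul_cancel₀ δ (by linarith)
        linarith
      have hbq : ∀ i, i ∉ s → basept n r A B i = q := by
        intro i hi
        rw [Finset.mem_union] at hi
        push_neg at hi
        simp [basept, hi.1, hi.2, hq]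
      have hy : basept n r A B + ε • v ∈ faceQ n r A B := by
        refine ⟨⟨fun i => ?_, ?_⟩, fun a ha => ?_, fun b hb => ?_⟩
        · by_cases hi : i ∈ s
          · have hvi : v i = 0 := hvz i hi
            simp only [Pi.add_apply, Pi.smul_apply, smul_eq_mul, hvi, mul_zero, add_zero]
            exact (hbp.1.1 i)
          · have := hεb i
            rw [abs_le] at this
            simp only [Pi.add_apply, Pi.smul_apply, smul_eq_mul, hbq i hi]
            constructor
            · have : δ ≤ q := min_le_left _ _
              have := (abs_le.mp (hεb i)).1
              linarith
            · have : δ ≤ 1 - q := min_le_right _ _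
              have := (abs_le.mp (hεb i)).2
              linarith
        · simp only [Pi.add_apply, Pi.smul_apply, smul_eq_mul, Finset.sum_add_distrib,
            ← Finset.mul_sum, hvsum, mul_zero, add_zero]
          exact hbp.1.2
        · have hvi : v a = 0 := hvz a (Finset.mem_union_left _ ha)
          simp [hvi, hbp.2.1 a ha]
        · have hvi : v b = 0 := hvz b (Finset.mem_union_right _ hb)
          simp [hvi, hbp.2.2 b hb]
      have hmem : ε • v ∈ vectorSpan ℝ (faceQ n r A B) := by
        have := vsub_mem_vectorSpan ℝ hy hbp
        simpa using this
      have : v = ε⁻¹ • (ε • v) := by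
        rw [smul_smul, inv_mul_cancel₀ hε0.ne', one_smul]
      rw [this]
      exact Submodule.smul_mem _ _ hmem
  -- surjectivity of f
  have hsurj : Function.Surjective f := by
    rintro ⟨u, g⟩
    have hscn : (sᶜ.card : ℝ) ≠ 0 := by
      have : 0 < sᶜ.card := by
        rw [Finset.card_compl, Fintype.card_fin]
        omega
      positivity
    set a : ℝ := (u - ∑ j, g j) / (sᶜ.card : ℝ) with ha
    refine ⟨fun i => if h : i ∈ s then g ⟨i, h⟩ else a, ?_⟩
    have hrest : (LinearMap.funLeft ℝ ℝ (Subtype.val))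
        (fun i => if h : i ∈ s then g ⟨i, h⟩ else a) = g := by
      funext j
      simp [LinearMap.funLeft_apply, j.2]
    have hsum : ∑ i, (if h : i ∈ s then g ⟨i, h⟩ else a) = u := by
      rw [← Finset.sum_add_sum_compl s]
      have h1 : ∑ i ∈ s, (if h : i ∈ s then g ⟨i, h⟩ else a) = ∑ j, g j := by
        rw [← Finset.sum_attach s (fun i => if h : i ∈ s then g ⟨i, h⟩ else a)]
        rw [Finset.univ_eq_attach]
        exact Finset.sum_congr rfl (fun j _ => by simp [j.2])
      have h2 : ∑ i ∈ sᶜ, (if h : i ∈ s then g ⟨i, h⟩ else a) = (sᶜ.card : ℝ) * a := by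
        have hcong : ∀ i ∈ sᶜ, (if h : i ∈ s then g ⟨i, h⟩ else a) = a := by
          intro i hi; rw [dif_neg (Finset.mem_compl.mp hi)]
        rw [Finset.sum_congr rfl hcong, Finset.sum_const, nsmul_eq_mul]
      rw [h1, h2, ha]
      field_simp
      ring
    rw [hf, LinearMap.prod_apply]
    rw [Prod.mk.injEq]
    exact ⟨by simpa [coeffFun_apply] using hsum, hrest⟩
  -- finrank computation
  have hrank := LinearMap.finrank_range_add_finrank_ker f
  rw [LinearMap.range_eq_top.mpr hsurj, finrank_top] at hrank
  have hcod : Module.finrank ℝ (ℝ × (↥s → ℝ)) = 1 + s.card := by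
    rw [Module.finrank_prod, Module.finrank_self, Module.finrank_fintype_fun_eq_card,
      Fintype.card_coe]
  have hdom : Module.finrank ℝ (Fin n → ℝ) = n := by
    rw [Module.finrank_fintype_fun_eq_card, Fintype.card_fin]
  rw [hcod, hdom] at hrank
  rw [direction_affineSpan, hvs]
  omega

theorem hypersimplex_faces (n r : ℕ) (hr : 0 < r) (hrn : r < n) :
    (∀ F : Set (Fin n → ℝ),
      IsExposedFaceOf (hypersimplex n r) F ↔
      ∃ A B : Finset (Fin n), Disjoint A B ∧
        ((A.card = n - r ∧ B.card = r) ∨ (A.card < n - r ∧ B.card < r)) ∧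
        F = faceQ n r A B) ∧
    (∀ A B : Finset (Fin n), Disjoint A B →
      ((A.card = n - r ∧ B.card = r) ∨ (A.card < n - r ∧ B.card < r) →
        (faceQ n r A B).Nonempty) ∧
      (A.card = n - r ∧ B.card = r →
        faceQ n r A B = {fun i => if i ∈ B then (1 : ℝ) else 0}) ∧
      (A.card < n - r ∧ B.card < r →
        Module.finrank ℝ (affineSpan ℝ (faceQ n r A B)).direction
          = n - 1 - A.card - B.card)) := by
  constructor
  · intro F
    constructor
    · rintro ⟨hFne, ℓ, hFeq⟩
      classical
      set c : Fin n → ℝ := fun i => ℓ (fun j => if i = j then 1 else 0) with hc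
      have hℓ : ∀ x, ℓ x = coeffFun c x := by
        intro x
        rw [LinearMap.pi_apply_eq_sum_univ ℓ x, coeffFun_apply]
        exact Finset.sum_congr rfl (fun i _ => by rw [smul_eq_mul, mul_comm, hc])
      have hFeq' : F = {x ∈ hypersimplex n r |
          ∀ y ∈ hypersimplex n r, coeffFun c y ≤ coeffFun c x} := by
        rw [hFeq]; ext x; simp only [Set.mem_setOf_eq, hℓ]
      set σ := Tuple.sort c with hσ
      have hmono : Monotone (c ∘ σ) := Tuple.monotone_sort c
      have hkn : n - r < n := by omega
      set k : Fin n := ⟨n - r, hkn⟩ with hk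
      set t : ℝ := c (σ k) with ht
      set A : Finset (Fin n) := univ.filter (fun i => c i < t) with hAdef
      set B : Finset (Fin n) := univ.filter (fun i => t < c i) with hBdef
      have hAmem : ∀ a ∈ A, c a < t := fun a ha => (Finset.mem_filter.mp ha).2
      have hBmem : ∀ b ∈ B, t < c b := fun b hb => (Finset.mem_filter.mp hb).2
      have hCt : ∀ i, i ∉ A → i ∉ B → c i = t := by
        intro i hiA hiB
        rw [hAdef, Finset.mem_filter] at hiA
        rw [hBdef, Finset.mem_filter] at hiB
        push_neg at hiA hiB
        have h1 := hiA (Finset.mem_univ i)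
        have h2 := hiB (Finset.mem_univ i)
        linarith
      have hABdisj : Disjoint A B := by
        rw [Finset.disjoint_left]
        intro i hiA hiB
        linarith [hAmem i hiA, hBmem i hiB]
      have hBcard : B.card < r := by
        have h1 : B.card = (univ.filter (fun j : Fin n => t < c (σ j))).card := by
          apply Finset.card_nbij' (fun i => σ.symm i) (fun j => σ j)
          · intro i hi
            rw [Finset.mem_coe, Finset.mem_filter] at hi ⊢
            simpa using hi.2
          · intro j hj
            rw [Finset.mem_coe, Finset.mem_filter] at hj ⊢
            exact ⟨Finset.mem_univ _, hj.2⟩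
          · intro i _; simp
          · intro j _; simp
        have h2 : (univ.filter (fun j : Fin n => t < c (σ j))) ⊆ Finset.Ioi k := by
          intro j hj
          rw [Finset.mem_filter] at hj
          rw [Finset.mem_Ioi]
          by_contra h
          push_neg at h
          have := hmono h
          simp only [Function.comp_apply] at this
          rw [ht] at hj
          linarith [hj.2]
        have h3 := Finset.card_le_card h2
        rw [Fin.card_Ioi] at h3
        have : (k : ℕ) = n - r := rfl
        omega
      have hAcard : A.card + r ≤ n := by
        have h1 : A.card = (univ.filter (fun j : Fin n => c (σ j) < t)).card := by
          apply Finset.card_nbij' (fun i => σ.symm i) (fun j => σ j)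
          · intro i hi
            rw [Finset.mem_coe, Finset.mem_filter] at hi ⊢
            simpa using hi.2
          · intro j hj
            rw [Finset.mem_coe, Finset.mem_filter] at hj ⊢
            exact ⟨Finset.mem_univ _, hj.2⟩
          · intro i _; simp
          · intro j _; simp
        have h2 : (univ.filter (fun j : Fin n => c (σ j) < t)) ⊆ Finset.Iio k := by
          intro j hj
          rw [Finset.mem_filter] at hj
          rw [Finset.mem_Iio]
          by_contra h
          push_neg at h
          have := hmono h
          simp only [Function.comp_apply] at this
          rw [ht] at hj
          linarith [hj.2]
        have h3 := Finset.card_le_card h2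
        rw [Fin.card_Iio] at h3
        have : (k : ℕ) = n - r := rfl
        omega
      have hFface : F = faceQ n r A B :=
        hFeq'.trans (argmax_eq c t A B hAmem hBmem hCt hBcard.le hAcard)
      by_cases hAc : A.card = n - r
      · -- point case: absorb the middle coordinates into B
        set C : Finset (Fin n) := (A ∪ B)ᶜ with hCdef
        have hABucard : (A ∪ B).card = A.card + B.card := Finset.card_union_of_disjoint hABdisj
        have hCcard : C.card = r - B.card := by
          rw [hCdef, Finset.card_compl, Fintype.card_fin, hABucard]
          omega
        have hBC : Disjoint B C := by
          rw [hCdef]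
          exact Disjoint.mono_left Finset.subset_union_right disjoint_compl_right
        have hAC : Disjoint A C := by
          rw [hCdef]
          exact Disjoint.mono_left Finset.subset_union_left disjoint_compl_right
        have hone : ∀ x ∈ faceQ n r A B, ∀ i ∈ C, x i = 1 := by
          rintro x ⟨hx, hA0, hB1⟩ i hi
          have hsplit : ∑ j ∈ (A ∪ B), x j + ∑ j ∈ C, x j = (r : ℝ) := by
            rw [hCdef, Finset.sum_add_sum_compl]
            exact hx.2
          have hAB' : ∑ j ∈ (A ∪ B), x j = (B.card : ℝ) := by
            rw [Finset.sum_union hABdisj, Finset.sum_eq_zero hA0, zero_add]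
            rw [Finset.sum_congr rfl hB1, Finset.sum_const, nsmul_eq_mul, mul_one]
          have hCsum : ∑ j ∈ C, x j = (C.card : ℝ) := by
            rw [hCcard, Nat.cast_sub hBcard.le]
            linarith [hsplit, hAB']
          have hzero : ∑ j ∈ C, (1 - x j) = 0 := by
            rw [Finset.sum_sub_distrib, Finset.sum_const, nsmul_eq_mul, mul_one, hCsum]
            ring
          have := (Finset.sum_eq_zero_iff_of_nonneg
            (fun j _ => by linarith [(hx.1 j).2])).mp hzero i hi
          linarith
        have hface2 : faceQ n r A B = faceQ n r A (B ∪ C) := by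
          ext x
          constructor
          · intro hx
            refine ⟨hx.1, hx.2.1, fun b hb => ?_⟩
            rcases Finset.mem_union.mp hb with h | h
            · exact hx.2.2 b h
            · exact hone x hx b h
          · intro hx
            exact ⟨hx.1, hx.2.1, fun b hb => hx.2.2 b (Finset.mem_union_left _ hb)⟩
        refine ⟨A, B ∪ C, ?_, Or.inl ⟨hAc, ?_⟩, hFface.trans hface2⟩
        · exact Finset.disjoint_union_right.mpr ⟨hABdisj, hAC⟩
        · rw [Finset.card_union_of_disjoint hBC, hCcard]
          omega
      · exact ⟨A, B, hABdisj, Or.inr ⟨by omega, hBcard⟩, hFface⟩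
    · rintro ⟨A, B, hAB, hcond, rfl⟩
      classical
      have hBr : B.card ≤ r := by rcases hcond with ⟨_, h⟩ | ⟨_, h⟩ <;> omega
      have hAr : A.card + r ≤ n := by rcases hcond with ⟨h, _⟩ | ⟨h, _⟩ <;> omega
      refine ⟨⟨basept n r A B, basept_mem hAB hBr hAr⟩, ?_⟩
      set c : Fin n → ℝ := fun i => if i ∈ B then 1 else if i ∈ A then -1 else 0 with hc
      refine ⟨coeffFun c, ?_⟩
      refine (argmax_eq c 0 A B ?_ ?_ ?_ hBr hAr).symm
      · intro a ha
        have : a ∉ B := fun h => Finset.disjoint_left.mp hAB ha h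
        simp [hc, this, ha]
      · intro b hb
        simp [hc, hb]
      · intro i hiA hiB
        simp [hc, hiA, hiB]
  · intro A B hAB
    refine ⟨?_, ?_, ?_⟩
    · rintro (⟨h1, h2⟩ | ⟨h1, h2⟩)
      · exact ⟨basept n r A B, basept_mem hAB (by omega) (by omega)⟩
      · exact ⟨basept n r A B, basept_mem hAB (by omega) (by omega)⟩
    · rintro ⟨h1, h2⟩
      exact faceQ_singleton hrn.le A B hAB h1 h2
    · rintro ⟨h1, h2⟩
      exact faceQ_dim hr hrn A B hAB h1 h2
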